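/- Let K be a field of characteristic zero which is not algebraically closed but such that the quadratic extension K[X]/(X^2+1) is an algebraically closed field. Let K_{>0} = {a^2 : a ∈ K, a ≠ 0}. Then K_{>0} is closed under addition: for all a, b ∈ K_{>0}, a + b ∈ K_{>0}. (Together with the obvious closure under multiplication and inverses, K_{>0} is a semifield.) -/

import Mathlib

open Polynomial

section Aux

variable {K : Type*} [Field K]

private lemma aux_monic : ((X : Polynomial K) ^ 2 + 1).Monic := by
  have : ((X : Polynomial K) ^ 2 + 1) = X ^ 2 + C 1 := by simp
  rw [this]
  exact Polynomial.monic_X_pow_add_C 1 (by norm_num)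

private lemma aux_degree : ((X : Polynomial K) ^ 2 + 1).degree = 2 := by
  have : ((X : Polynomial K) ^ 2 + 1) = X ^ 2 + C 1 := by simp
  rw [this]
  exact Polynomial.degree_X_pow_add_C (by norm_num) 1

private lemma aux_root_sq :
    (AdjoinRoot.root ((X : Polynomial K) ^ 2 + 1)) ^ 2 = -1 := by
  have h := AdjoinRoot.mk_self (f := (X : Polynomial K) ^ 2 + 1)
  rw [map_add, map_pow, map_one, AdjoinRoot.mk_X] at h
  linear_combination h

/-- Every element of `K[X]/(X²+1)` is of the form `x + y·root`. -/
private lemma aux_decomp (w : AdjoinRoot ((X : Polynomial K) ^ 2 + 1)) :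
    ∃ x y : K, w = AdjoinRoot.of _ x + AdjoinRoot.of _ y * AdjoinRoot.root _ := by
  obtain ⟨p, rfl⟩ := AdjoinRoot.mk_surjective w
  set f := (X : Polynomial K) ^ 2 + 1
  have hmod : AdjoinRoot.mk f p = AdjoinRoot.mk f (p %ₘ f) := by
    conv_lhs => rw [← Polynomial.modByMonic_add_div p f]
    simp
  have hdeg : (p %ₘ f).degree ≤ 1 := by
    have := Polynomial.degree_modByMonic_lt p (aux_monic (K := K))
    rw [aux_degree] at this
    exact Order.le_of_lt_succ (by exact_mod_cast this)
  have hrep := Polynomial.eq_X_add_C_of_degree_le_one hdeg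
  set x := (p %ₘ f).coeff 0 with hx
  set y := (p %ₘ f).coeff 1 with hy
  refine ⟨x, y, ?_⟩
  rw [hmod, hrep, map_add, map_mul, AdjoinRoot.mk_X, AdjoinRoot.mk_C, AdjoinRoot.mk_C]
  ring

/-- `1, root` are linearly independent. -/
private lemma aux_indep {x y : K}
    (h : AdjoinRoot.of ((X : Polynomial K) ^ 2 + 1) x
        + AdjoinRoot.of _ y * AdjoinRoot.root _ = 0) : x = 0 ∧ y = 0 := by
  set f := (X : Polynomial K) ^ 2 + 1
  have hmk : AdjoinRoot.mk f (C x + C y * X) = 0 := by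
    rw [map_add, map_mul, AdjoinRoot.mk_X, AdjoinRoot.mk_C, AdjoinRoot.mk_C]
    exact h
  have hdvd : f ∣ C x + C y * X := (AdjoinRoot.mk_eq_zero).1 hmk
  have hzero : (C x + C y * X : Polynomial K) = 0 := by
    refine Polynomial.eq_zero_of_dvd_of_degree_lt hdvd ?_
    rw [aux_degree]
    calc (C x + C y * X : Polynomial K).degree ≤ 1 := by
          apply le_trans (Polynomial.degree_add_le _ _)
          rw [sup_le_iff]
          refine ⟨le_trans Polynomial.degree_C_le (by norm_num), ?_⟩
          refine le_trans (Polynomial.degree_mul_le _ _) ?_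
          calc (C y : Polynomial K).degree + (X : Polynomial K).degree
              ≤ 0 + 1 := add_le_add Polynomial.degree_C_le Polynomial.degree_X_le
            _ = 1 := by norm_num
      _ < 2 := by norm_num
  constructor
  · have := congrArg (fun p => Polynomial.coeff p 0) hzero
    simpa using this
  · have := congrArg (fun p => Polynomial.coeff p 1) hzero
    simpa using this

end Aux

/-- In a real closed field `K` (char zero, not algebraically closed, but `K[X]/(X²+1)`
algebraically closed), the set `K_{>0} = {a² : a ∈ K, a ≠ 0}` is closed under addition. -/
theorem pos_closed_under_add (K : Type*) [Field K] [CharZero K]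
    (hK : ¬ IsAlgClosed K)
    (hfield : IsField (AdjoinRoot ((X : Polynomial K) ^ 2 + 1)))
    (halg : @IsAlgClosed (AdjoinRoot ((X : Polynomial K) ^ 2 + 1)) hfield.toField)
    (a b : K)
    (ha : a ∈ {x : K | ∃ c : K, c ≠ 0 ∧ x = c ^ 2})
    (hb : b ∈ {x : K | ∃ c : K, c ≠ 0 ∧ x = c ^ 2}) :
    a + b ∈ {x : K | ∃ c : K, c ≠ 0 ∧ x = c ^ 2} := by
  obtain ⟨c, hc, rfl⟩ := ha
  obtain ⟨d, hd, rfl⟩ := hb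
  set f := (X : Polynomial K) ^ 2 + 1 with hf
  letI : Field (AdjoinRoot f) := hfield.toField
  haveI : IsAlgClosed (AdjoinRoot f) := halg
  have hr2 : (AdjoinRoot.root f) ^ 2 = -1 := aux_root_sq
  -- conjugation
  have haev : (Polynomial.aeval (-(AdjoinRoot.root f))) f = 0 := by
    show (Polynomial.aeval (-(AdjoinRoot.root f))) ((X : Polynomial K) ^ 2 + 1) = 0
    simp [neg_pow]
    linear_combination hr2
  set σ : AdjoinRoot f →+* AdjoinRoot f :=
    (AdjoinRoot.liftAlgHom f (Algebra.ofId K _) (-(AdjoinRoot.root f)) haev).toRingHom with hσ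
  have hσr : σ (AdjoinRoot.root f) = -(AdjoinRoot.root f) := by
    simpa [hσ] using AdjoinRoot.liftAlgHom_root f (Algebra.ofId K _) (-(AdjoinRoot.root f)) haev
  have hσof : ∀ x : K, σ (AdjoinRoot.of f x) = AdjoinRoot.of f x := by
    intro x
    have := (AdjoinRoot.liftAlgHom f (Algebra.ofId K _) (-(AdjoinRoot.root f)) haev).commutes x
    simpa [hσ, AdjoinRoot.algebraMap_eq] using this
  -- z = c + d·root, and its square root w
  set z : AdjoinRoot f := AdjoinRoot.of f c + AdjoinRoot.of f d * AdjoinRoot.root f with hz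
  have hzne : z ≠ 0 := by
    intro h
    exact hc (aux_indep (by rw [← hz]; exact h)).1
  obtain ⟨w, hw⟩ := IsAlgClosed.exists_pow_nat_eq z (n := 2) (by norm_num)
  obtain ⟨x, y, hxy⟩ := aux_decomp w
  change w = AdjoinRoot.of f x + AdjoinRoot.of f y * AdjoinRoot.root f at hxy
  -- norms
  have hnormw : w * σ w = AdjoinRoot.of f (x ^ 2 + y ^ 2) := by
    rw [hxy]
    simp only [map_add, map_mul, hσr, hσof, map_pow]
    linear_combination (-(AdjoinRoot.of f y) ^ 2) * hr2
  have hnormz : z * σ z = AdjoinRoot.of f (c ^ 2 + d ^ 2) := by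
    rw [hz]
    simp only [map_add, map_mul, hσr, hσof, map_pow]
    linear_combination (-(AdjoinRoot.of f d) ^ 2) * hr2
  have key : AdjoinRoot.of f ((x ^ 2 + y ^ 2) ^ 2) = AdjoinRoot.of f (c ^ 2 + d ^ 2) := by
    rw [map_pow, ← hnormw, ← hnormz, ← hw, map_pow]
    ring
  have hval : (x ^ 2 + y ^ 2) ^ 2 = c ^ 2 + d ^ 2 := (AdjoinRoot.of f).injective key
  have hwne : w ≠ 0 := by
    intro h
    apply hzne
    rw [← hw, h]; ring
  have hne : x ^ 2 + y ^ 2 ≠ 0 := by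
    intro h
    have h0 : w * σ w = 0 := by rw [hnormw, h, map_zero]
    rcases mul_eq_zero.1 h0 with h' | h'
    · exact hwne h'
    · exact hwne (σ.injective (by rw [h', map_zero]))
  exact ⟨x ^ 2 + y ^ 2, hne, hval.symm⟩
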